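/- Let σ = τ₁τ₂⋯τ_k ∈ S_n be a product of k pairwise disjoint cycles of length d with Fix(σ) = ∅. Then the subgroup H_σ = { x ∈ S_{X_σ} : xσx⁻¹ = σ^z for some integer z } acts transitively by conjugation on the set of cycles {τ₁,τ₂,...,τ_k}, and the kernel of the induced homomorphism H_σ → S_k given by this action is K_{H_σ} = { x ∈ H_σ : for every 1 ≤ i ≤ k, xτᵢx⁻¹ = τᵢ^z for some integer z }. -/

import Mathlib

open Equiv Equiv.Perm Finset

/-- The "non-trivial centralizer" `Cent₀(σ)`: permutations commuting with `σ`
whose support is contained in the support of `σ`. -/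
def Cent0 {n : ℕ} (σ : Equiv.Perm (Fin n)) : Subgroup (Equiv.Perm (Fin n)) where
  carrier := {π | Commute π σ ∧ π.support ⊆ σ.support}
  one_mem' := ⟨Commute.one_left σ, by simp⟩
  mul_mem' := by
    intro a b ha hb
    exact ⟨ha.1.mul_left hb.1, (Equiv.Perm.support_mul_le a b).trans (sup_le ha.2 hb.2)⟩
  inv_mem' := by
    intro a ha
    exact ⟨ha.1.inv_left, by rw [Equiv.Perm.support_inv]; exact ha.2⟩

/-- The product `∏_{i ∈ s} τᵢ^{zᵢ}` of powers of pairwise disjoint permutations. -/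
def Kprod {n k : ℕ} (τ : Fin k → Equiv.Perm (Fin n))
    (hdisj : ∀ i j, i ≠ j → Equiv.Perm.Disjoint (τ i) (τ j))
    (s : Finset (Fin k)) (z : Fin k → ℤ) : Equiv.Perm (Fin n) :=
  s.noncommProd (fun i => τ i ^ z i)
    (fun a _ b _ hab => Commute.zpow_zpow ((hdisj a b hab).commute) _ _)

/-- The subgroup `H_σ = { x ∈ S_{X_σ} : xσx⁻¹ = σ^z for some integer z }`, as a set. -/
def Hgrp {n : ℕ} (σ : Equiv.Perm (Fin n)) : Set (Equiv.Perm (Fin n)) :=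
  {x | x.support ⊆ σ.support ∧ ∃ z : ℤ, x * σ * x⁻¹ = σ ^ z}

section AuxHelpers

set_option linter.unusedSectionVars false
set_option linter.unusedVariables false

variable {α : Type*} [DecidableEq α] [Fintype α]

lemma listprod_fixed' (L : List (Perm α)) (p : α) (h : ∀ g ∈ L, g p = p) :
    L.prod p = p := by
  induction L with
  | nil => simp
  | cons g t ih =>
    rw [List.prod_cons, Equiv.Perm.mul_apply,
      ih (fun u hu => h u (List.mem_cons_of_mem _ hu)), h g List.mem_cons_self]

lemma listprod_agree' (L : List (Perm α)) (hp : L.Pairwise Equiv.Perm.Disjoint) (g : Perm α)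
    (hg : g ∈ L) (p : α) (hps : g p ≠ p) : L.prod p = g p := by
  induction L with
  | nil => simp at hg
  | cons g₀ t ih =>
    rw [List.pairwise_cons] at hp
    rcases List.mem_cons.mp hg with rfl | hg'
    · rw [List.prod_cons, Equiv.Perm.mul_apply, listprod_fixed' t p ?_]
      intro u hu
      rcases (hp.1 u hu) p with h1 | h1
      · exact absurd h1 hps
      · exact h1
    · rw [List.prod_cons, Equiv.Perm.mul_apply, ih hp.2 hg']
      rcases (hp.1 g hg') (g p) with h1 | h1
      · exact h1
      · exact absurd (g.injective h1) hps

lemma cycle_transfer {c c' : Perm α} (hc : c.IsCycle) (hc' : c'.IsCycle)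
    (hcard : c.support.card = c'.support.card) {a b : α}
    (ha : a ∈ c.support) (hb : b ∈ c'.support)
    {m m' : ℤ} (h : (c ^ m) a = (c ^ m') a) : (c' ^ m) b = (c' ^ m') b := by
  have h1 : (c ^ (m - m')) ((c ^ m') a) = (c ^ m') a := by
    rw [← Equiv.Perm.mul_apply, ← zpow_add, sub_add_cancel, h]
  have hq : (c ^ m') a ∈ c.support := Equiv.Perm.zpow_apply_mem_support.2 ha
  have h2 : c ^ (m - m') = 1 := by
    have hnn : 0 ≤ (m - m') % (orderOf c : ℤ) :=
      Int.emod_nonneg _ (by exact_mod_cast (orderOf_pos c).ne')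
    have hz : c ^ (m - m') = c ^ ((m - m') % (orderOf c : ℤ)).toNat := by
      rw [← zpow_natCast, Int.toNat_of_nonneg hnn, zpow_mod_orderOf]
    rw [hz] at h1 ⊢
    exact (hc.pow_eq_one_iff' (mem_support.1 hq)).2 h1
  have hdvd : (orderOf c : ℤ) ∣ (m - m') := orderOf_dvd_iff_zpow_eq_one.2 h2
  have h3 : c' ^ (m - m') = 1 := by
    apply orderOf_dvd_iff_zpow_eq_one.1
    rwa [hc'.orderOf, ← hcard, ← hc.orderOf]
  have : c' ^ m = c' ^ (m - m') * c' ^ m' := by rw [← zpow_add, sub_add_cancel]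
  rw [this, h3, one_mul]

/-- The "swap two disjoint cycles" involution. -/
lemma exists_swap_conj {c c' : Perm α}
    (hc : IsCycle c) (hc' : IsCycle c') (hcard : c.support.card = c'.support.card)
    (hd : Equiv.Perm.Disjoint c c') :
    ∃ x : Perm α, (∀ p, x (c p) = c' (x p)) ∧ (∀ p, x (c' p) = c (x p)) ∧
      (∀ p, p ∉ c.support → p ∉ c'.support → x p = p) ∧
      (∀ p ∈ c.support, x p ∈ c'.support) ∧
      (∀ p ∈ c'.support, x p ∈ c.support) := by
  classical
  obtain ⟨a, ha, -⟩ := id hc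
  obtain ⟨b, hb, -⟩ := id hc'
  have haS : a ∈ c.support := mem_support.2 ha
  have hbS : b ∈ c'.support := mem_support.2 hb
  have SCi : ∀ p ∈ c.support, ∃ m : ℤ, (c ^ m) a = p := fun p hp =>
    hc.exists_zpow_eq ha (mem_support.1 hp)
  have SCj : ∀ p ∈ c'.support, ∃ m : ℤ, (c' ^ m) b = p := fun p hp =>
    hc'.exists_zpow_eq hb (mem_support.1 hp)
  set f : α → α := fun p => if h : p ∈ c.support then (c' ^ (SCi p h).choose) b
    else if h2 : p ∈ c'.support then (c ^ (SCj p h2).choose) a else p with hf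
  have key_i : ∀ m : ℤ, f ((c ^ m) a) = (c' ^ m) b := by
    intro m
    have hp : (c ^ m) a ∈ c.support := Equiv.Perm.zpow_apply_mem_support.2 haS
    rw [hf]
    dsimp only
    rw [dif_pos hp]
    exact cycle_transfer hc hc' hcard haS hbS ((SCi _ hp).choose_spec)
  have key_j : ∀ m : ℤ, f ((c' ^ m) b) = (c ^ m) a := by
    intro m
    have hp' : (c' ^ m) b ∈ c'.support := Equiv.Perm.zpow_apply_mem_support.2 hbS
    have hpn : (c' ^ m) b ∉ c.support :=
      Finset.disjoint_right.mp hd.disjoint_support hp'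
    rw [hf]
    dsimp only
    rw [dif_neg hpn, dif_pos hp']
    exact cycle_transfer hc' hc hcard.symm hbS haS ((SCj _ hp').choose_spec)
  have key_out : ∀ p, p ∉ c.support → p ∉ c'.support → f p = p := by
    intro p h1 h2
    rw [hf]
    dsimp only
    rw [dif_neg h1, dif_neg h2]
  have finv : Function.Involutive f := by
    intro p
    by_cases h1 : p ∈ c.support
    · obtain ⟨m, hm⟩ := SCi p h1
      rw [← hm, key_i m, key_j m]
    · by_cases h2 : p ∈ c'.support
      · obtain ⟨m, hm⟩ := SCj p h2
        rw [← hm, key_j m, key_i m]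
      · rw [key_out p h1 h2, key_out p h1 h2]
  have hcoe : ∀ p, Function.Involutive.toPerm f finv p = f p := fun _ => rfl
  refine ⟨Function.Involutive.toPerm f finv, ?_, ?_, ?_, ?_, ?_⟩
  · intro p
    rw [hcoe, hcoe]
    by_cases h1 : p ∈ c.support
    · obtain ⟨m, hm⟩ := SCi p h1
      have e1 : c p = (c ^ (m + 1)) a := by
        rw [← hm, ← Equiv.Perm.mul_apply, ← zpow_one_add, add_comm 1 m]
      rw [e1, key_i (m + 1), ← hm, key_i m, ← Equiv.Perm.mul_apply, ← zpow_one_add, add_comm 1 m]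
    · by_cases h2 : p ∈ c'.support
      · obtain ⟨m, hm⟩ := SCj p h2
        have e1 : c p = p := notMem_support.1 h1
        have e2 : f p = (c ^ m) a := by rw [← hm, key_j m]
        have e3 : f p ∉ c'.support := by
          rw [e2]
          exact Finset.disjoint_left.mp hd.disjoint_support
            (Equiv.Perm.zpow_apply_mem_support.2 haS)
        rw [e1, notMem_support.1 e3]
      · have e1 : c p = p := notMem_support.1 h1
        rw [e1, key_out p h1 h2, notMem_support.1 h2]
  · intro p
    rw [hcoe, hcoe]
    by_cases h2 : p ∈ c'.support
    · obtain ⟨m, hm⟩ := SCj p h2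
      have e1 : c' p = (c' ^ (m + 1)) b := by
        rw [← hm, ← Equiv.Perm.mul_apply, ← zpow_one_add, add_comm 1 m]
      rw [e1, key_j (m + 1), ← hm, key_j m, ← Equiv.Perm.mul_apply, ← zpow_one_add, add_comm 1 m]
    · by_cases h1 : p ∈ c.support
      · obtain ⟨m, hm⟩ := SCi p h1
        have e1 : c' p = p := notMem_support.1 h2
        have e2 : f p = (c' ^ m) b := by rw [← hm, key_i m]
        have e3 : f p ∉ c.support := by
          rw [e2]
          exact Finset.disjoint_right.mp hd.disjoint_support
            (Equiv.Perm.zpow_apply_mem_support.2 hbS)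
        rw [e1, notMem_support.1 e3]
      · have e1 : c' p = p := notMem_support.1 h2
        rw [e1, key_out p h1 h2, notMem_support.1 h1]
  · intro p h1 h2
    rw [hcoe]
    exact key_out p h1 h2
  · intro p hp
    obtain ⟨m, hm⟩ := SCi p hp
    rw [hcoe, ← hm, key_i m]
    exact Equiv.Perm.zpow_apply_mem_support.2 hbS
  · intro p hp
    obtain ⟨m, hm⟩ := SCj p hp
    rw [hcoe, ← hm, key_j m]
    exact Equiv.Perm.zpow_apply_mem_support.2 haS

end AuxHelpers

section MainAux

set_option linter.unusedSectionVars false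
set_option linter.unusedVariables false

variable {n k d : ℕ} (σ : Equiv.Perm (Fin n)) (τ : Fin k → Equiv.Perm (Fin n))
    (hcyc : ∀ i, (τ i).IsCycle) (hlen : ∀ i, (τ i).support.card = d)
    (hdisj : ∀ i j, i ≠ j → Equiv.Perm.Disjoint (τ i) (τ j))
    (hσ : σ = (List.ofFn τ).prod)
    (hfix : ∀ x : Fin n, σ x ≠ x)

include hdisj hσ in
lemma sig_agree : ∀ (l : Fin k) (p : Fin n), p ∈ (τ l).support → σ p = τ l p := by
  intro l p hp
  rw [hσ]
  exact listprod_agree' _ (List.pairwise_ofFn.2 fun i j hij => hdisj i j hij.ne) (τ l)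
    (List.mem_ofFn.2 ⟨l, rfl⟩) p (mem_support.1 hp)

include hσ hfix in
lemma total_supp : ∀ p : Fin n, ∃ l : Fin k, p ∈ (τ l).support := by
  intro p
  by_contra hc
  push_neg at hc
  apply hfix p
  rw [hσ]
  apply listprod_fixed'
  intro g hg
  obtain ⟨l, rfl⟩ := List.mem_ofFn.1 hg
  simpa [Equiv.Perm.mem_support] using hc l

include hcyc hdisj hσ hfix in
lemma supp_inv : ∀ (l : Fin k) (p : Fin n), p ∈ (τ l).support ↔ σ p ∈ (τ l).support := by
  intro l p
  constructor
  · intro hp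
    rw [sig_agree σ τ hdisj hσ l p hp]
    exact Equiv.Perm.apply_mem_support.2 hp
  · intro hp
    by_contra hc
    obtain ⟨m, hm⟩ := total_supp σ τ hσ hfix p
    have hml : m ≠ l := by rintro rfl; exact hc hm
    rw [sig_agree σ τ hdisj hσ m p hm] at hp
    exact (Finset.disjoint_left.mp (hdisj m l hml).disjoint_support
      (Equiv.Perm.apply_mem_support.2 hm)) hp

include hcyc hdisj hσ hfix in
lemma supp_inv_zpow : ∀ (l : Fin k) (z : ℤ) (p : Fin n),
    p ∈ (τ l).support ↔ (σ ^ z) p ∈ (τ l).support := by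
  have hN : ∀ (l : Fin k) (m : ℕ) (p : Fin n),
      p ∈ (τ l).support ↔ (σ ^ m) p ∈ (τ l).support := by
    intro l m
    induction m with
    | zero => simp
    | succ m ih =>
      intro p
      calc p ∈ (τ l).support ↔ σ p ∈ (τ l).support := supp_inv σ τ hcyc hdisj hσ hfix l p
        _ ↔ (σ ^ m) (σ p) ∈ (τ l).support := ih (σ p)
        _ ↔ (σ ^ (m + 1)) p ∈ (τ l).support := by rw [pow_succ, Equiv.Perm.mul_apply]
  intro l z p
  rcases le_or_gt 0 z with h | h
  · lift z to ℕ using h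
    rw [zpow_natCast]
    exact hN l z p
  · have hkey : (σ ^ ((-z).toNat : ℕ)) ((σ ^ z) p) = p := by
      rw [← Equiv.Perm.mul_apply, ← zpow_natCast, ← zpow_add,
        Int.toNat_of_nonneg (by omega), neg_add_cancel, zpow_zero, Equiv.Perm.one_apply]
    have h2 := hN l (-z).toNat ((σ ^ z) p)
    rw [hkey] at h2
    exact h2.symm

include hcyc hdisj hσ hfix in
lemma sig_agree_zpow : ∀ (l : Fin k) (z : ℤ) (p : Fin n),
    p ∈ (τ l).support → (σ ^ z) p = (τ l ^ z) p := by
  have hN : ∀ (l : Fin k) (m : ℕ) (p : Fin n),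
      p ∈ (τ l).support → (σ ^ m) p = (τ l ^ m) p := by
    intro l m
    induction m with
    | zero => simp
    | succ m ih =>
      intro p hp
      have h1 : σ p = τ l p := sig_agree σ τ hdisj hσ l p hp
      have h2 : τ l p ∈ (τ l).support := Equiv.Perm.apply_mem_support.2 hp
      rw [pow_succ, Equiv.Perm.mul_apply, h1, ih (τ l p) h2, pow_succ,
        Equiv.Perm.mul_apply]
  intro l z p hp
  rcases le_or_gt 0 z with h | h
  · lift z to ℕ using h
    rw [zpow_natCast, zpow_natCast]
    exact hN l z p hp
  · apply (σ ^ ((-z).toNat : ℕ)).injective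
    have e1 : (σ ^ ((-z).toNat : ℕ)) ((σ ^ z) p) = p := by
      rw [← Equiv.Perm.mul_apply, ← zpow_natCast, ← zpow_add,
        Int.toNat_of_nonneg (by omega), neg_add_cancel, zpow_zero, Equiv.Perm.one_apply]
    have hp2 : (τ l ^ z) p ∈ (τ l).support := Equiv.Perm.zpow_apply_mem_support.2 hp
    have e2 : (σ ^ ((-z).toNat : ℕ)) ((τ l ^ z) p) = p := by
      rw [hN l (-z).toNat ((τ l ^ z) p) hp2, ← Equiv.Perm.mul_apply, ← zpow_natCast,
        ← zpow_add, Int.toNat_of_nonneg (by omega), neg_add_cancel, zpow_zero,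
        Equiv.Perm.one_apply]
    rw [e1, e2]

end MainAux

/-- `σ = τ₁⋯τ_k` is a product of `k` pairwise disjoint `d`-cycles
without fixed points.  The subgroup `H_σ = { x ∈ S_{X_σ} : xσx⁻¹ = σ^z, z ∈ ℤ }`
acts transitively by conjugation on the cycles `{τ₁,…,τ_k}` (each `x ∈ H_σ` maps the
set of points of each cycle to the set of points of some cycle, and any cycle can be
mapped to any other), and the kernel of the induced homomorphism `H_σ → S_k` consists
exactly of those `x ∈ H_σ` with `xτᵢx⁻¹ = τᵢ^z` for some integer `z`, for every `i`. -/
theorem Hgrp_transitive_and_kernel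
    {n k d : ℕ} (σ : Equiv.Perm (Fin n)) (τ : Fin k → Equiv.Perm (Fin n))
    (hcyc : ∀ i, (τ i).IsCycle) (hlen : ∀ i, (τ i).support.card = d)
    (hdisj : ∀ i j, i ≠ j → Equiv.Perm.Disjoint (τ i) (τ j))
    (hσ : σ = (List.ofFn τ).prod)
    (hfix : ∀ x : Fin n, σ x ≠ x) :
    -- the action is well defined: `x ∈ H_σ` sends the points of a cycle to a cycle
    (∀ x ∈ Hgrp σ, ∀ i : Fin k, ∃ j : Fin k,
      ∀ p ∈ (τ i).support, x p ∈ (τ j).support) ∧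
    -- transitivity
    (∀ i j : Fin k, ∃ x ∈ Hgrp σ, ∀ p ∈ (τ i).support, x p ∈ (τ j).support) ∧
    -- the kernel of the induced homomorphism `H_σ → S_k`
    (∀ x ∈ Hgrp σ,
      ((∀ i : Fin k, ∀ p ∈ (τ i).support, x p ∈ (τ i).support) ↔
        (∀ i : Fin k, ∃ z : ℤ, x * τ i * x⁻¹ = τ i ^ z))) := by
  refine ⟨?_, ?_, ?_⟩
  · -- Part 1
    rintro x ⟨-, z, hz⟩ i
    obtain ⟨p₀, hp₀m, -⟩ := hcyc i
    have hp₀ : p₀ ∈ (τ i).support := mem_support.2 hp₀m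
    obtain ⟨j, hj⟩ := total_supp σ τ hσ hfix (x p₀)
    refine ⟨j, fun p hp => ?_⟩
    obtain ⟨m, hm⟩ := (hcyc i).exists_zpow_eq hp₀m (mem_support.1 hp)
    have hσm : (σ ^ m) p₀ = p := by
      rw [sig_agree_zpow σ τ hcyc hdisj hσ hfix i m p₀ hp₀, hm]
    have hconj : x * σ ^ m * x⁻¹ = σ ^ (z * m) := by
      have h1 : (x * σ * x⁻¹) ^ m = (σ ^ z) ^ m := by rw [hz]
      rwa [conj_zpow, ← zpow_mul] at h1
    have hval : x p = (σ ^ (z * m)) (x p₀) := by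
      rw [← hconj]
      simp only [Equiv.Perm.mul_apply, Equiv.Perm.coe_inv, Equiv.symm_apply_apply, hσm]
    rw [hval]
    exact (supp_inv_zpow σ τ hcyc hdisj hσ hfix j (z * m) (x p₀)).1 hj
  · -- Part 2 : transitivity
    intro i j
    by_cases hij : i = j
    · subst hij
      refine ⟨1, ⟨by simp, 1, by simp⟩, fun p hp => by simpa using hp⟩
    · obtain ⟨x, hx1, hx2, hxout, hxmap, hxmap'⟩ :=
        exists_swap_conj (hcyc i) (hcyc j) (by rw [hlen, hlen]) (hdisj i j hij)
      have hcomm : ∀ p, x (σ p) = σ (x p) := by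
        intro p
        by_cases h1 : p ∈ (τ i).support
        · rw [sig_agree σ τ hdisj hσ i p h1, hx1,
            sig_agree σ τ hdisj hσ j (x p) (hxmap p h1)]
        · by_cases h2 : p ∈ (τ j).support
          · rw [sig_agree σ τ hdisj hσ j p h2, hx2,
              sig_agree σ τ hdisj hσ i (x p) (hxmap' p h2)]
          · have h1' : σ p ∉ (τ i).support := fun hc =>
              h1 ((supp_inv σ τ hcyc hdisj hσ hfix i p).2 hc)
            have h2' : σ p ∉ (τ j).support := fun hc =>
              h2 ((supp_inv σ τ hcyc hdisj hσ hfix j p).2 hc)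
            rw [hxout (σ p) h1' h2', hxout p h1 h2]
      refine ⟨x, ⟨fun q _ => mem_support.2 (hfix q), 1, ?_⟩, hxmap⟩
      have hxs : x * σ = σ * x := Equiv.ext hcomm
      rw [zpow_one, hxs, mul_assoc, mul_inv_cancel, mul_one]
  · -- Part 3 : kernel
    rintro x ⟨-, z, hz⟩
    constructor
    · intro hker i
      refine ⟨z, ?_⟩
      have himg : (τ i).support.image x = (τ i).support :=
        Finset.eq_of_subset_of_card_le
          (fun q hq => by
            obtain ⟨p, hp, rfl⟩ := Finset.mem_image.1 hq
            exact hker i p hp)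
          (by rw [Finset.card_image_of_injective _ x.injective])
      have hinvmap : ∀ q ∈ (τ i).support, x⁻¹ q ∈ (τ i).support := by
        intro q hq
        rw [← himg] at hq
        obtain ⟨p', hp', hxp'⟩ := Finset.mem_image.1 hq
        rw [← hxp', Equiv.Perm.coe_inv, Equiv.symm_apply_apply]
        exact hp'
      apply Equiv.ext
      intro q
      rw [Equiv.Perm.mul_apply, Equiv.Perm.mul_apply]
      by_cases hp : x⁻¹ q ∈ (τ i).support
      · rw [← sig_agree σ τ hdisj hσ i _ hp]
        have h2 : x (σ (x⁻¹ q)) = (σ ^ z) q := by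
          have h3 := congrArg (fun g : Perm (Fin n) => g q) hz
          simpa [Equiv.Perm.mul_apply] using h3
        have hq : q ∈ (τ i).support := by
          have h4 := hker i _ hp
          rwa [Equiv.Perm.coe_inv, Equiv.apply_symm_apply] at h4
        rw [h2]
        exact sig_agree_zpow σ τ hcyc hdisj hσ hfix i z q hq
      · rw [notMem_support.1 hp, Equiv.Perm.coe_inv, Equiv.apply_symm_apply]
        have hq : q ∉ (τ i).support := fun hq => hp (hinvmap q hq)
        exact (notMem_support.1 fun h => hq (support_zpow_le _ z h)).symm
    · intro h i p hp
      obtain ⟨w, hw⟩ := h i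
      have hmove : x (τ i p) ≠ x p := fun hc => (mem_support.1 hp) (x.injective hc)
      have h2 : (τ i ^ w) (x p) ≠ x p := by
        rw [← hw]
        simpa [Equiv.Perm.mul_apply] using hmove
      exact support_zpow_le _ w (mem_support.2 h2)
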